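/- Let λ > 0, μ ∈ ℝ, and define F₁(t) = (arctan(λt + μ) − arctan(λt/2 + μ))/(arctan(λt/2 + μ) − arctan(λt/4 + μ)). If t > 0 and F₁(t) ≥ 3/2, then F₁(t/2) > 3/2. -/

import Mathlib

open Real intervalIntegral MeasureTheory

private lemma cont_aux (μ c d : ℝ) : Continuous (fun x : ℝ => d / (1 + (c * x + μ) ^ 2)) := by
  apply Continuous.div continuous_const (by fun_prop)
  intro x; positivity

/-- arctan difference as interval integral of shifted kernel -/
private lemma arctan_diff_int (μ a b : ℝ) :
    Real.arctan (b + μ) - Real.arctan (a + μ) = ∫ x in a..b, 1 / (1 + (x + μ) ^ 2) := by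
  rw [intervalIntegral.integral_comp_add_right (fun x => 1 / (1 + x ^ 2)) μ,
    integral_one_div_one_add_sq]

/-- doubled version -/
private lemma arctan_diff_int2 (μ a b : ℝ) :
    Real.arctan (2 * b + μ) - Real.arctan (2 * a + μ)
      = ∫ x in a..b, 2 * (1 / (1 + (2 * x + μ) ^ 2)) := by
  have h := intervalIntegral.integral_comp_mul_left
      (fun x => 1 / (1 + (x + μ) ^ 2)) (a := a) (b := b) (c := (2:ℝ)) two_ne_zero
  rw [intervalIntegral.integral_const_mul, h, smul_eq_mul,
    ← arctan_diff_int μ (2*a) (2*b)]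
  ring

private lemma quad_neg (μ s y : ℝ) (hs : 0 < s) (hy : 2 * s < y)
    (h : 1 + μ ^ 2 - 8 * μ * s - 32 * s ^ 2 ≤ 0) :
    1 + μ ^ 2 - 4 * μ * y - 8 * y ^ 2 < 0 := by
  have hy0 : 0 < y := by linarith
  nlinarith [mul_pos hs (sub_pos.mpr hy), mul_nonneg hs.le (sq_nonneg μ),
    mul_pos hs hy0, mul_pos (mul_pos hs hy0) (sub_pos.mpr hy),
    mul_nonneg (mul_pos hs hy0).le (sq_nonneg μ)]

private lemma quad_pos (μ s x : ℝ) (hx0 : 0 < x) (hx : x < 2 * s)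
    (h : 0 < 1 + μ ^ 2 - 8 * μ * s - 32 * s ^ 2) :
    0 < 1 + μ ^ 2 - 4 * μ * x - 8 * x ^ 2 := by
  nlinarith [mul_pos hx0 (sub_pos.mpr hx), mul_pos hx0 h, sq_nonneg μ,
    mul_nonneg hx0.le (sq_nonneg μ), mul_pos (mul_pos hx0 hx0) (sub_pos.mpr hx)]

private lemma key (μ s : ℝ) (hs : 0 < s)
    (h : 3 * (Real.arctan (4 * s + μ) - Real.arctan (2 * s + μ))
        ≤ 2 * (Real.arctan (8 * s + μ) - Real.arctan (4 * s + μ))) :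
    3 * (Real.arctan (2 * s + μ) - Real.arctan (s + μ))
      < 2 * (Real.arctan (4 * s + μ) - Real.arctan (2 * s + μ)) := by
  set q : ℝ → ℝ := fun x => 4 / (1 + (2 * x + μ) ^ 2) - 3 / (1 + (1 * x + μ) ^ 2) with hq
  have hqc : Continuous q := (cont_aux μ 2 4).sub (cont_aux μ 1 3)
  -- integral identity
  have hint : ∀ a b : ℝ, (∫ x in a..b, q x)
      = 2 * (Real.arctan (2 * b + μ) - Real.arctan (2 * a + μ))
        - 3 * (Real.arctan (b + μ) - Real.arctan (a + μ)) := by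
    intro a b
    have h1 : (∫ x in a..b, (4:ℝ) / (1 + (2 * x + μ) ^ 2))
        = 2 * (Real.arctan (2 * b + μ) - Real.arctan (2 * a + μ)) := by
      rw [arctan_diff_int2 μ a b, ← intervalIntegral.integral_const_mul]
      congr 1; funext x; ring
    have h2 : (∫ x in a..b, (3:ℝ) / (1 + (x + μ) ^ 2))
        = 3 * (Real.arctan (b + μ) - Real.arctan (a + μ)) := by
      rw [arctan_diff_int μ a b, ← intervalIntegral.integral_const_mul]
      congr 1; funext x; ring
    have := intervalIntegral.integral_sub
      (((cont_aux μ 2 4).intervalIntegrable a b) : IntervalIntegrable _ volume a b)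
      (((cont_aux μ 1 3).intervalIntegrable a b) : IntervalIntegrable _ volume a b)
    rw [hq]
    simp only [one_mul] at this ⊢
    rw [this, h1, h2]
  -- sign of q
  have hsign : ∀ y : ℝ, (0 < 1 + μ ^ 2 - 4 * μ * y - 8 * y ^ 2 → 0 < q y)
      ∧ (1 + μ ^ 2 - 4 * μ * y - 8 * y ^ 2 < 0 → q y < 0) := by
    intro y
    have hA : (0:ℝ) < 1 + (2 * y + μ) ^ 2 := by positivity
    have hB : (0:ℝ) < 1 + (1 * y + μ) ^ 2 := by positivity
    constructor
    · intro hg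
      have : (3:ℝ) / (1 + (1 * y + μ) ^ 2) < 4 / (1 + (2 * y + μ) ^ 2) := by
        rw [div_lt_div_iff₀ hB hA]; nlinarith
      simpa [hq] using sub_pos.mpr this
    · intro hg
      have : (4:ℝ) / (1 + (2 * y + μ) ^ 2) < 3 / (1 + (1 * y + μ) ^ 2) := by
        rw [div_lt_div_iff₀ hA hB]; nlinarith
      simpa [hq] using sub_neg.mpr this
  -- hypothesis gives nonneg integral on [2s, 4s]
  have hQ2 : 0 ≤ ∫ x in (2*s)..(4*s), q x := by
    rw [hint (2*s) (4*s)]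
    have e1 : 2 * (4 * s) + μ = 8 * s + μ := by ring
    have e2 : 2 * (2 * s) + μ = 4 * s + μ := by ring
    rw [e1, e2]; linarith
  -- deduce the quadratic is positive at 2s
  have hg2s : 0 < 1 + μ ^ 2 - 8 * μ * s - 32 * s ^ 2 := by
    by_contra hcon
    push_neg at hcon
    have hneg : 0 < ∫ x in (2*s)..(4*s), -q x := by
      apply intervalIntegral_pos_of_pos_on (hqc.neg.intervalIntegrable _ _)
      · intro x hx
        have hx1 : 2 * s < x := hx.1
        have := (hsign x).2 (quad_neg μ s x hs hx1 hcon)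
        rw [Pi.neg_apply]; linarith
      · linarith
    rw [intervalIntegral.integral_neg] at hneg
    linarith
  -- hence q > 0 on (s, 2s), so integral positive
  have hQ1 : 0 < ∫ x in s..(2*s), q x := by
    apply intervalIntegral_pos_of_pos_on (hqc.intervalIntegrable _ _)
    · intro x hx
      exact (hsign x).1 (quad_pos μ s x (lt_trans hs hx.1) hx.2 hg2s)
    · linarith
  rw [hint s (2*s)] at hQ1
  have e2 : 2 * (2 * s) + μ = 4 * s + μ := by ring
  rw [e2] at hQ1
  linarith

theorem stmt_2 (lam μ t : ℝ) (hlam : 0 < lam) (ht : 0 < t)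
    (hF : (Real.arctan (lam*t + μ) - Real.arctan (lam*t/2 + μ)) /
          (Real.arctan (lam*t/2 + μ) - Real.arctan (lam*t/4 + μ)) ≥ 3/2) :
    (Real.arctan (lam*(t/2) + μ) - Real.arctan (lam*(t/2)/2 + μ)) /
      (Real.arctan (lam*(t/2)/2 + μ) - Real.arctan (lam*(t/2)/4 + μ)) > 3/2 := by
  set s : ℝ := lam * t / 8 with hsdef
  have hs : 0 < s := by positivity
  have e1 : lam * t + μ = 8 * s + μ := by rw [hsdef]; ring
  have e2 : lam * t / 2 + μ = 4 * s + μ := by rw [hsdef]; ring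
  have e3 : lam * t / 4 + μ = 2 * s + μ := by rw [hsdef]; ring
  have e4 : lam * (t/2) + μ = 4 * s + μ := by rw [hsdef]; ring
  have e5 : lam * (t/2) / 2 + μ = 2 * s + μ := by rw [hsdef]; ring
  have e6 : lam * (t/2) / 4 + μ = s + μ := by rw [hsdef]; ring
  rw [e1, e2, e3] at hF
  rw [e4, e5, e6]
  -- denominators positive by strict monotonicity of arctan
  have hd1 : 0 < Real.arctan (4 * s + μ) - Real.arctan (2 * s + μ) := by
    have := Real.arctan_strictMono (show 2 * s + μ < 4 * s + μ by linarith)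
    linarith
  have hd2 : 0 < Real.arctan (2 * s + μ) - Real.arctan (s + μ) := by
    have := Real.arctan_strictMono (show s + μ < 2 * s + μ by linarith)
    linarith
  have hF' : 3 * (Real.arctan (4 * s + μ) - Real.arctan (2 * s + μ))
      ≤ 2 * (Real.arctan (8 * s + μ) - Real.arctan (4 * s + μ)) := by
    rw [ge_iff_le, le_div_iff₀ hd1] at hF
    linarith
  have hk := key μ s hs hF'
  rw [gt_iff_lt, lt_div_iff₀ hd2]
  linarith
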